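/- Let $K$ be a field whose characteristic is $0$ or greater than $n$, and let $A, B \in M_n(K)$ satisfy $A^2 - 2AB + B^2 = 0$. If every eigenvalue of $A$ (in the algebraic closure $\overline{K}$) has algebraic multiplicity at most $2$, then $AB = BA$. -/

import Mathlib

open Polynomial Module LinearMap FiniteDimensional

lemma charpoly_sub_smul_one' {K : Type*} [Field K] {m : Type*} [Fintype m] [DecidableEq m]
    (M : Matrix m m K) (μ : K) :
    (M - μ • 1).charpoly = M.charpoly.comp (X + C μ) := by
  have hmat : (M - μ • (1 : Matrix m m K)).charmatrix
      = (eval₂RingHom C (X + C μ)).mapMatrix M.charmatrix := by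
    ext i j
    by_cases h : i = j
    · subst h
      simp [Matrix.charmatrix_apply, Matrix.one_apply, Matrix.diagonal_apply]
      ring
    · simp [Matrix.charmatrix_apply, Matrix.one_apply, Matrix.diagonal_apply, h]
  rw [Matrix.charpoly, hmat, ← RingHom.map_det]
  rfl

lemma rootMult_eq_finrank_maxGen {K V : Type*} [Field K] [AddCommGroup V] [Module K V]
    [FiniteDimensional K V] (f : Module.End K V) (μ : K) :
    (LinearMap.charpoly f).rootMultiplicity μ
      = finrank K (f.maxGenEigenspace μ) := by
  have h1 : f.maxGenEigenspace μ = (f - μ • 1).maxGenEigenspace 0 := by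
    ext x
    simp [Module.End.mem_maxGenEigenspace]
  have b := Module.Free.chooseBasis K V
  have h2 : LinearMap.charpoly (f - μ • 1) = (LinearMap.charpoly f).comp (X + C μ) := by
    rw [← LinearMap.charpoly_toMatrix (f - μ • 1) b, ← LinearMap.charpoly_toMatrix f b,
      map_sub]
    have : (LinearMap.toMatrix b b) (μ • (1 : Module.End K V)) = μ • 1 := by
      rw [map_smul]
      congr 1
      rw [show (1 : Module.End K V) = LinearMap.id from rfl, LinearMap.toMatrix_id]
    rw [this, charpoly_sub_smul_one']
  rw [rootMultiplicity_eq_natTrailingDegree, ← h2, ← LinearMap.finrank_maxGenEigenspace_zero_eq, h1]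

lemma eval_charpoly_mat {K : Type*} [Field K] {m : Type*} [Fintype m] [DecidableEq m]
    (M : Matrix m m K) (t : K) :
    M.charpoly.eval t = (t • 1 - M).det := by
  have hmat : (evalRingHom t).mapMatrix M.charmatrix = t • 1 - M := by
    ext i j
    by_cases h : i = j
    · subst h; simp [Matrix.charmatrix_apply, Matrix.one_apply, Matrix.diagonal_apply]
    · simp [Matrix.charmatrix_apply, Matrix.one_apply, Matrix.diagonal_apply, h]
  rw [Matrix.charpoly, show M.charmatrix.det.eval t = (evalRingHom t) M.charmatrix.det from rfl,
    RingHom.map_det, hmat]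

lemma eval_charpoly_end {K V : Type*} [Field K] [AddCommGroup V] [Module K V]
    [FiniteDimensional K V] (S : Module.End K V) (t : K) :
    (LinearMap.charpoly S).eval t = LinearMap.det (t • (1 : Module.End K V) - S) := by
  have b := Module.Free.chooseBasis K V
  rw [← LinearMap.charpoly_toMatrix S b, eval_charpoly_mat, ← LinearMap.det_toMatrix b]
  congr 1
  rw [map_sub, map_smul]
  congr 1
  rw [show (1 : Module.End K V) = LinearMap.id from rfl, LinearMap.toMatrix_id]

lemma finrank_maxGen_add_le {K V : Type*} [Field K] [AddCommGroup V] [Module K V]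
    [FiniteDimensional K V] (f : Module.End K V) (U : Submodule K V)
    (hU : ∀ x ∈ U, f x ∈ U) (μ : K) :
    finrank K (Module.End.maxGenEigenspace (f.restrict hU) μ)
      + finrank K (Module.End.maxGenEigenspace (U.mapQ U f (fun x hx => hU x hx)) μ)
      ≤ finrank K (f.maxGenEigenspace μ) := by
  classical
  set G := f.maxGenEigenspace μ with hG
  set fbar := U.mapQ U f (fun x hx => hU x hx) with hfbar
  set GQ := Module.End.maxGenEigenspace fbar μ with hGQ
  -- intertwining
  have hint : ∀ k : ℕ, U.mkQ.comp ((f - μ • 1) ^ k) = ((fbar - μ • 1) ^ k).comp U.mkQ := by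
    intro k
    induction k with
    | zero => ext x; simp
    | succ k ih =>
      rw [pow_succ, pow_succ]
      ext x
      simp only [LinearMap.comp_apply, Module.End.mul_apply]
      rw [← LinearMap.comp_apply U.mkQ, ih]
      simp only [LinearMap.comp_apply, LinearMap.sub_apply, LinearMap.smul_apply,
        Module.End.one_apply, map_sub, map_smul]
      have : U.mkQ (f x) = fbar (U.mkQ x) := by
        simp [hfbar, Submodule.mkQ_apply, Submodule.mapQ_apply]
      rw [this]
  set π : ↥G →ₗ[K] V ⧸ U := U.mkQ.comp G.subtype with hπ
  -- kernel of π
  have hker : LinearMap.ker π = Submodule.comap G.subtype (U ⊓ G) := by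
    ext ⟨x, hx⟩
    simp only [LinearMap.mem_ker, hπ, LinearMap.comp_apply, Submodule.subtype_apply,
      Submodule.mem_comap, Submodule.mem_inf]
    rw [← Submodule.Quotient.mk_eq_zero U, Submodule.mkQ_apply]
    exact ⟨fun h => ⟨h, hx⟩, fun h => h.1⟩
  have hkerrank : finrank K (LinearMap.ker π)
      = finrank K (Module.End.maxGenEigenspace (f.restrict hU) μ) := by
    have h1 : U ⊓ G = Submodule.map U.subtype (Module.End.maxGenEigenspace (f.restrict hU) μ) :=
      Submodule.inf_genEigenspace f U (k := (⊤ : ℕ∞)) (μ := μ) hU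
    rw [hker, LinearEquiv.finrank_eq
      (Submodule.comapSubtypeEquivOfLe (inf_le_right : U ⊓ G ≤ G)), h1,
      Submodule.finrank_map_subtype_eq]
  -- surjectivity onto GQ
  have hsurj : GQ ≤ LinearMap.range π := by
    rintro q hq
    obtain ⟨v, rfl⟩ := U.mkQ_surjective q
    rw [Module.End.mem_maxGenEigenspace] at hq
    obtain ⟨N, hN⟩ := hq
    have hwU : ((f - μ • 1) ^ N) v ∈ U := by
      rw [← Submodule.Quotient.mk_eq_zero U, ← Submodule.mkQ_apply,
        ← LinearMap.comp_apply, hint N]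
      simpa using hN
    -- Fitting decomposition of (f - μ•1) restricted to U
    have hU2 : ∀ x ∈ U, (f - μ • 1) x ∈ U := by
      intro x hx
      simpa using Submodule.sub_mem U (hU x hx) (Submodule.smul_mem U μ hx)
    set φ := (f - μ • 1).restrict hU2 with hφ
    obtain ⟨a, ha⟩ := Filter.eventually_atTop.mp
      ((φ.eventually_iSup_ker_pow_eq).and (φ.eventually_iInf_range_pow_eq))
    have hcompl : IsCompl (LinearMap.ker (φ ^ a)) (LinearMap.range (φ ^ a)) := by
      rw [← (ha a le_rfl).1, ← (ha a le_rfl).2]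
      exact φ.isCompl_iSup_ker_pow_iInf_range_pow
    have hmem : (⟨((f - μ • 1) ^ N) v, hwU⟩ : ↥U) ∈
        LinearMap.ker (φ ^ a) ⊔ LinearMap.range (φ ^ a) := by
      rw [hcompl.sup_eq_top]; trivial
    obtain ⟨y, hy, z, hz, hyz⟩ := Submodule.mem_sup.mp hmem
    have hz' : z ∈ LinearMap.range (φ ^ (N + a)) := by
      rwa [← (ha a le_rfl).2, (ha (N+a) (Nat.le_add_left a N)).2] at hz
    obtain ⟨x, hx⟩ := hz'
    set u : ↥U := (φ ^ a) x with hu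
    have hphiNu : (φ ^ N) u = z := by
      rw [hu, ← Module.End.mul_apply, ← pow_add, hx]
    set v' := v - (u : V) with hv'
    have hrestr : ∀ (k : ℕ) (w : ↥U), ((φ ^ k) w : V) = ((f - μ • 1) ^ k) (w : V) := by
      intro k w
      rw [hφ, Module.End.pow_restrict, LinearMap.restrict_apply]
    have hstep : ((f - μ • 1) ^ N) v' = (y : V) := by
      have h5 : ((f - μ • 1) ^ N) v' = ((f - μ • 1) ^ N) v - ((f - μ • 1) ^ N) (u : V) := by
        rw [hv', map_sub]
      rw [h5, ← hrestr N u, hphiNu]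
      have h6 := congrArg (Subtype.val) hyz
      simp only [Submodule.coe_add] at h6
      rw [← h6]
      abel
    have hv'mem : v' ∈ G := by
      rw [hG, Module.End.mem_maxGenEigenspace]
      refine ⟨a + N, ?_⟩
      rw [pow_add, Module.End.mul_apply, hstep]
      have h7 : (φ ^ a) y = 0 := hy
      rw [← hrestr a y, h7, Submodule.coe_zero]
    refine ⟨⟨v', hv'mem⟩, ?_⟩
    rw [hπ]
    simp only [LinearMap.comp_apply, Submodule.subtype_apply, Submodule.mkQ_apply]
    rw [hv', Submodule.Quotient.mk_sub]
    have h8 : Submodule.Quotient.mk (p := U) (u : V) = 0 := by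
      rw [Submodule.Quotient.mk_eq_zero]; exact u.2
    rw [h8, sub_zero]
  -- assemble
  have hrn := LinearMap.finrank_range_add_finrank_ker π
  have h1 : finrank K GQ ≤ finrank K (LinearMap.range π) := Submodule.finrank_mono hsurj
  omega

lemma intertwine_pow {K M N : Type*} [Field K] [AddCommGroup M] [Module K M]
    [AddCommGroup N] [Module K N] (ι : M →ₗ[K] N) (φ : Module.End K M) (ψ : Module.End K N)
    (h : ι.comp φ = ψ.comp ι) (μ : K) (k : ℕ) :
    ι.comp ((φ - μ • 1) ^ k) = ((ψ - μ • 1) ^ k).comp ι := by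
  induction k with
  | zero => ext x; simp
  | succ k ih =>
    rw [pow_succ, pow_succ]
    ext x
    simp only [LinearMap.comp_apply, Module.End.mul_apply]
    rw [← LinearMap.comp_apply ι, ih]
    simp only [LinearMap.comp_apply, LinearMap.sub_apply, LinearMap.smul_apply,
      Module.End.one_apply, map_sub, map_smul]
    rw [← LinearMap.comp_apply ι φ, h]
    rfl

lemma finrank_maxGen_le_of_injective {K M N : Type*} [Field K] [AddCommGroup M] [Module K M]
    [AddCommGroup N] [Module K N] [FiniteDimensional K M] [FiniteDimensional K N]
    (ι : M →ₗ[K] N) (hι : Function.Injective ι) (φ : Module.End K M) (ψ : Module.End K N)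
    (h : ι.comp φ = ψ.comp ι) (μ : K) :
    finrank K (φ.maxGenEigenspace μ) ≤ finrank K (ψ.maxGenEigenspace μ) := by
  have hmap : Submodule.map ι (φ.maxGenEigenspace μ) ≤ ψ.maxGenEigenspace μ := by
    rintro _ ⟨x, hx, rfl⟩
    simp only [SetLike.mem_coe] at hx
    rw [Module.End.mem_maxGenEigenspace] at hx ⊢
    obtain ⟨k, hk⟩ := hx
    refine ⟨k, ?_⟩
    rw [← LinearMap.comp_apply, ← intertwine_pow ι φ ψ h μ k, LinearMap.comp_apply, hk, map_zero]
  calc finrank K (φ.maxGenEigenspace μ)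
      = finrank K (Submodule.map ι (φ.maxGenEigenspace μ)) :=
        (LinearEquiv.finrank_eq (Submodule.equivMapOfInjective ι hι _))
    _ ≤ finrank K (ψ.maxGenEigenspace μ) := Submodule.finrank_mono hmap

lemma isNilpotent_of_comm_relation {K V : Type*} [Field K] [AddCommGroup V] [Module K V]
    [FiniteDimensional K V]
    (hcast : ∀ i j : ℕ, i ≤ finrank K V → j ≤ finrank K V → (i : K) = (j : K) → i = j)
    (f g : Module.End K V) (hrel : g * f = f * g + g ^ 2) : IsNilpotent g := by
  classical
  -- the key commutation identity
  have hk : ∀ k : ℕ, (f + (k : ℕ) • g) * g ^ k = g ^ k * f := by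
    intro k
    induction k with
    | zero => simp
    | succ k ih =>
      have claim1 : (f + ((k+1) : ℕ) • g) * g = g * (f + (k : ℕ) • g) := by
        rw [add_mul, mul_add, smul_mul_assoc, mul_smul_comm, succ_nsmul, ← sq,
          show f * g = g * f - g ^ 2 by rw [hrel]; abel]
        abel
      rw [pow_succ', ← mul_assoc, claim1, mul_assoc, ih, ← mul_assoc]
  -- stabilized range
  obtain ⟨a, ha⟩ := Filter.eventually_atTop.mp g.eventually_iInf_range_pow_eq
  set W := LinearMap.range (g ^ a) with hW
  have hrange : ∀ b : ℕ, a ≤ b → LinearMap.range (g ^ b) = W := by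
    intro b hb; rw [← ha b hb, ha a le_rfl]
  have hgW : ∀ x ∈ W, g x ∈ W := by
    rintro x ⟨y, rfl⟩
    rw [show g ((g ^ a) y) = (g ^ (a+1)) (y) by rw [pow_succ']; rfl]
    have : (g ^ (a+1)) y ∈ LinearMap.range (g ^ (a+1)) := ⟨y, rfl⟩
    rwa [hrange (a+1) (Nat.le_succ a)] at this
  have hfW : ∀ x ∈ W, f x ∈ W := by
    rintro x ⟨y, rfl⟩
    have key := congrArg (fun (φ : Module.End K V) => φ y) (hk a)
    simp only [Module.End.mul_apply, LinearMap.add_apply, LinearMap.smul_apply] at key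
    have h2 : g ((g ^ a) y) = (g ^ (a+1)) y := by rw [pow_succ']; rfl
    have h1 : f ((g ^ a) y) = (g ^ a) (f y) - (a : ℕ) • ((g ^ (a+1)) y) := by
      rw [← h2, ← key]; abel
    rw [h1]
    have h3 : (g ^ (a+1)) y ∈ W := by
      rw [← hrange (a+1) (Nat.le_succ a)]; exact ⟨y, rfl⟩
    exact Submodule.sub_mem W ⟨f y, rfl⟩ (nsmul_mem h3 a)
  set f₀ := f.restrict hfW with hf₀
  set g₀ := g.restrict hgW with hg₀
  -- g₀ is surjective hence bijective
  have hgsurj : Function.Surjective g₀ := by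
    rintro ⟨x, hx⟩
    have hx' : x ∈ LinearMap.range (g ^ (a+1)) := by
      rw [hrange (a+1) (Nat.le_succ a)]; exact hx
    obtain ⟨y, hy⟩ := hx'
    have hyW : (g ^ a) y ∈ W := ⟨y, rfl⟩
    refine ⟨⟨(g ^ a) y, hyW⟩, ?_⟩
    apply Subtype.ext
    rw [hg₀, LinearMap.restrict_apply]
    simpa [pow_succ'] using hy
  have hginj : Function.Injective g₀ := by
    rw [LinearMap.injective_iff_surjective]
    exact hgsurj
  have hdetg : LinearMap.det g₀ ≠ 0 := by
    intro hdet
    have hlt := LinearMap.bot_lt_ker_of_det_eq_zero hdet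
    rw [LinearMap.ker_eq_bot.mpr hginj] at hlt
    exact lt_irrefl _ hlt
  -- restricted powers
  have hrestr : ∀ (k : ℕ) (w : ↥W), ((g₀ ^ k) w : V) = (g ^ k) (w : V) := by
    intro k w
    rw [hg₀, Module.End.pow_restrict, LinearMap.restrict_apply]
  -- restricted identity
  have hcoe_f : ∀ w : ↥W, ((f₀ w : V)) = f (w : V) := fun w => rfl
  have hcoe_g : ∀ w : ↥W, ((g₀ w : V)) = g (w : V) := fun w => rfl
  have hk₀ : ∀ k : ℕ, (f₀ + (k : ℕ) • g₀) * g₀ ^ k = g₀ ^ k * f₀ := by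
    intro k
    ext w
    have lhs : (((f₀ + (k : ℕ) • g₀) * g₀ ^ k) w : V)
        = ((f + (k : ℕ) • g) * g ^ k) (w : V) := by
      simp only [Module.End.mul_apply, LinearMap.add_apply, LinearMap.smul_apply,
        Submodule.coe_add, Submodule.coe_smul_of_tower]
      rw [hcoe_f, hcoe_g, hrestr k w]
    have rhs : ((g₀ ^ k * f₀) w : V) = (g ^ k * f) (w : V) := by
      simp only [Module.End.mul_apply]
      rw [hrestr k, hcoe_f]
    rw [lhs, rhs, hk k]
  -- determinant equalities
  have hdet : ∀ k : ℕ, LinearMap.det (f₀ + (k : ℕ) • g₀) = LinearMap.det f₀ := by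
    intro k
    have := congrArg LinearMap.det (hk₀ k)
    rw [map_mul, map_mul] at this
    rw [map_pow] at this
    exact mul_right_cancel₀ (pow_ne_zero k hdetg) (by rw [mul_comm] at this; linear_combination this)
  -- invert g₀
  set e := LinearEquiv.ofBijective g₀ ⟨hginj, hgsurj⟩ with he
  set S : Module.End K ↥W := (e.symm : ↥W →ₗ[K] ↥W) ∘ₗ f₀ with hS
  have hfactor : ∀ t : K, f₀ + t • g₀ = g₀ ∘ₗ (S + t • 1) := by
    intro t
    refine LinearMap.ext fun w => ?_
    have h9 : g₀ (S w) = f₀ w := by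
      show g₀ (e.symm (f₀ w)) = f₀ w
      have h10 := e.apply_symm_apply (f₀ w)
      exact h10
    have h11 : (g₀ ∘ₗ (S + t • 1)) w = g₀ (S w) + t • g₀ w := by
      simp only [LinearMap.comp_apply, LinearMap.add_apply, LinearMap.smul_apply,
        Module.End.one_apply, map_add, map_smul]
    rw [LinearMap.add_apply, LinearMap.smul_apply, h11, h9]
  have hdetfactor : ∀ t : K, LinearMap.det (f₀ + t • g₀)
      = LinearMap.det g₀ * (LinearMap.charpoly (-S)).eval t := by
    intro t
    rw [hfactor t, ← Module.End.mul_eq_comp, map_mul, eval_charpoly_end]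
    congr 2
    abel
  -- the polynomial identity
  set d := finrank K ↥W with hd
  have hdle : d ≤ finrank K V := Submodule.finrank_le W
  by_cases hd0 : d = 0
  · -- W = ⊥, so g ^ a = 0
    have hWbot : W = ⊥ := Submodule.finrank_eq_zero.mp hd0
    refine ⟨a, ?_⟩
    ext x
    have : (g ^ a) x ∈ W := ⟨x, rfl⟩
    rw [hWbot, Submodule.mem_bot] at this
    simpa using this
  · exfalso
    set p : Polynomial K := Polynomial.C (LinearMap.det g₀) * LinearMap.charpoly (-S)
      - Polynomial.C (LinearMap.det f₀) with hp
    have hpdeg : p.natDegree = d := by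
      have h1 : (Polynomial.C (LinearMap.det g₀) * LinearMap.charpoly (-S)).natDegree = d := by
        rw [Polynomial.natDegree_C_mul hdetg, LinearMap.charpoly_natDegree]
      rw [hp]
      rw [← h1]
      apply Polynomial.natDegree_sub_C
    have hpne : p ≠ 0 := by
      intro h0
      rw [h0, Polynomial.natDegree_zero] at hpdeg
      exact hd0 hpdeg.symm
    have hroots : ∀ k : ℕ, k ≤ d → ((k : K) ∈ p.roots) := by
      intro k hkd
      rw [Polynomial.mem_roots hpne]
      rw [hp, Polynomial.IsRoot.def, Polynomial.eval_sub, Polynomial.eval_mul,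
        Polynomial.eval_C, Polynomial.eval_C, ← hdetfactor]
      have hsmul : ((k : ℕ) : K) • g₀ = (k : ℕ) • g₀ := by
        rw [Nat.cast_smul_eq_nsmul]
      rw [hsmul, hdet k, sub_self]
    -- d+1 distinct roots in a polynomial of degree d: contradiction
    have hinj : ∀ i j : ℕ, i ≤ d → j ≤ d → (i : K) = (j : K) → i = j := by
      intro i j hi hj hij
      exact hcast i j (le_trans hi hdle) (le_trans hj hdle) hij
    have hcard : d + 1 ≤ p.roots.toFinset.card := by
      have hsub : (Finset.range (d+1)).image (fun k : ℕ => (k : K)) ⊆ p.roots.toFinset := by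
        intro x hx
        simp only [Finset.mem_image, Finset.mem_range] at hx
        obtain ⟨k, hk, rfl⟩ := hx
        rw [Multiset.mem_toFinset]
        exact hroots k (Nat.lt_succ_iff.mp hk)
      have hcardim : ((Finset.range (d+1)).image (fun k : ℕ => (k : K))).card = d + 1 := by
        rw [Finset.card_image_of_injOn, Finset.card_range]
        intro i hi j hj hij
        simp only [Finset.coe_range, Set.mem_Iio] at hi hj
        exact hinj i j (Nat.lt_succ_iff.mp hi) (Nat.lt_succ_iff.mp hj) hij
      calc d + 1 = _ := hcardim.symm
        _ ≤ p.roots.toFinset.card := Finset.card_le_card hsub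
    have : p.roots.toFinset.card ≤ d := by
      calc p.roots.toFinset.card ≤ Multiset.card p.roots := p.roots.toFinset_card_le
        _ ≤ p.natDegree := Polynomial.card_roots' p
        _ = d := hpdeg
    omega

lemma one_le_finrank_maxGen {K V : Type*} [Field K] [AddCommGroup V] [Module K V]
    [FiniteDimensional K V] (φ : Module.End K V) (μ : K) (hμ : φ.HasEigenvalue μ) :
    1 ≤ finrank K (φ.maxGenEigenspace μ) := by
  obtain ⟨v, hv⟩ := hμ.exists_hasEigenvector
  have hvm : v ∈ φ.maxGenEigenspace μ := by
    rw [Module.End.mem_maxGenEigenspace]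
    refine ⟨1, ?_⟩
    rw [pow_one, LinearMap.sub_apply, LinearMap.smul_apply, Module.End.one_apply,
      hv.apply_eq_smul, sub_self]
  by_contra hcon
  push_neg at hcon
  interval_cases h : finrank K (φ.maxGenEigenspace μ)
  · rw [Submodule.finrank_eq_zero] at h
    rw [h, Submodule.mem_bot] at hvm
    exact hv.right hvm

lemma exists_three_le_finrank_maxGen {K V : Type*} [Field K] [IsAlgClosed K] [AddCommGroup V]
    [Module K V] [FiniteDimensional K V]
    (f g : Module.End K V) (hrel : g * f = f * g + g ^ 2)
    (hnil : IsNilpotent g) (hg2 : g ^ 2 ≠ 0) :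
    ∃ μ : K, 3 ≤ finrank K (f.maxGenEigenspace μ) := by
  classical
  -- the nilpotency index
  have hex : ∃ k, g ^ k = 0 := by obtain ⟨N, hN⟩ := hnil; exact ⟨N, hN⟩
  set m := Nat.find hex with hm
  have hgm : g ^ m = 0 := Nat.find_spec hex
  have hmin : ∀ k, k < m → g ^ k ≠ 0 := fun k hk => Nat.find_min hex hk
  have hm3 : 3 ≤ m := by
    by_contra hcon
    push_neg at hcon
    have h2m : m ≤ 2 := by omega
    have : g ^ 2 = 0 := by
      calc g ^ 2 = g ^ m * g ^ (2 - m) := by rw [← pow_add]; congr 1; omega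
        _ = 0 := by rw [hgm, zero_mul]
    exact hg2 this
  -- key identity
  have hgk : ∀ k : ℕ, g ^ k * f = f * g ^ k + (k : ℕ) • g ^ (k + 1) := by
    intro k
    induction k with
    | zero => simp
    | succ k ih =>
      have h2 : g ^ 2 * g ^ k = g ^ (k + 2) := by rw [← pow_add]; ring_nf
      calc g ^ (k+1) * f = g * (g ^ k * f) := by rw [pow_succ', mul_assoc]
        _ = g * (f * g ^ k) + (k : ℕ) • (g * g ^ (k+1)) := by
            rw [ih, mul_add, mul_smul_comm]
        _ = (g * f) * g ^ k + (k : ℕ) • g ^ (k + 2) := by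
            rw [← mul_assoc, ← pow_succ']
        _ = (f * g) * g ^ k + g ^ 2 * g ^ k + (k : ℕ) • g ^ (k + 2) := by
            rw [hrel, add_mul]
        _ = f * g ^ (k+1) + g ^ (k + 2) + (k : ℕ) • g ^ (k + 2) := by
            rw [mul_assoc, ← pow_succ', h2]
        _ = f * g ^ (k+1) + ((k+1) : ℕ) • g ^ (k + 2) := by
            rw [succ_nsmul]
            abel
  -- invariance of kernels under f
  have hfker : ∀ (k : ℕ), ∀ x ∈ LinearMap.ker (g ^ k), f x ∈ LinearMap.ker (g ^ k) := by
    intro k x hx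
    rw [LinearMap.mem_ker] at hx ⊢
    have := congrArg (fun (φ : Module.End K V) => φ x) (hgk k)
    simp only [Module.End.mul_apply, LinearMap.add_apply, LinearMap.smul_apply] at this
    rw [this, hx, map_zero, zero_add]
    have h3 : (g ^ (k+1)) x = g ((g ^ k) x) := by rw [pow_succ']; rfl
    rw [h3, hx, map_zero, smul_zero]
  -- the three submodules
  set U2 := LinearMap.ker (g ^ (m-1)) with hU2def
  set U1 := LinearMap.ker (g ^ (m-2)) with hU1def
  set U0 := LinearMap.ker (g ^ (m-3)) with hU0def
  have hU2f : ∀ x ∈ U2, f x ∈ U2 := hfker (m-1)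
  -- g maps everything into U2
  have hgU2 : ∀ x : V, g x ∈ U2 := by
    intro x
    rw [hU2def, LinearMap.mem_ker, ← Module.End.mul_apply, ← pow_succ]
    have : m - 1 + 1 = m := by omega
    rw [this, hgm, LinearMap.zero_apply]
  have hgU2U1 : ∀ x ∈ U2, g x ∈ U1 := by
    intro x hx
    rw [hU2def, LinearMap.mem_ker] at hx
    rw [hU1def, LinearMap.mem_ker, ← Module.End.mul_apply, ← pow_succ]
    have h : m - 2 + 1 = m - 1 := by omega
    rw [h, hx]
  have hgU1U0 : ∀ x ∈ U1, g x ∈ U0 := by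
    intro x hx
    rw [hU1def, LinearMap.mem_ker] at hx
    rw [hU0def, LinearMap.mem_ker, ← Module.End.mul_apply, ← pow_succ]
    have h : m - 3 + 1 = m - 2 := by omega
    rw [h, hx]
  have hg2U2U0 : ∀ x ∈ U2, (g ∘ₗ g) x ∈ U0 := by
    intro x hx
    exact hgU1U0 _ (hgU2U1 _ hx)
  -- V ⧸ U2 is nontrivial
  have hU2netop : U2 ≠ ⊤ := by
    intro htop
    apply hmin (m-1) (by omega)
    ext x
    have : x ∈ U2 := by rw [htop]; trivial
    rw [hU2def, LinearMap.mem_ker] at this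
    simpa using this
  haveI : Nontrivial (V ⧸ U2) := Submodule.Quotient.nontrivial_iff.mpr hU2netop
  -- quotient endomorphism and its eigenvalue
  set fbar := U2.mapQ U2 f (fun x hx => hU2f x hx) with hfbar
  obtain ⟨μ, hμ⟩ := Module.End.exists_eigenvalue fbar
  refine ⟨μ, ?_⟩
  -- level 2 objects
  set U1c : Submodule K ↥U2 := U1.comap U2.subtype with hU1c
  set f2 := f.restrict hU2f with hf2
  have hf2coe : ∀ x : ↥U2, (f2 x : V) = f (x : V) := fun x => rfl
  have hU1cf : ∀ x ∈ U1c, f2 x ∈ U1c := by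
    intro x hx
    simp only [hU1c, Submodule.mem_comap, Submodule.subtype_apply] at hx ⊢
    rw [hf2coe]
    exact hfker (m-2) _ hx
  set f2bar := U1c.mapQ U1c f2 (fun x hx => hU1cf x hx) with hf2bar
  -- Φ : V ⧸ U2 ↪ ↥U2 ⧸ U1c
  set gc : V →ₗ[K] ↥U2 := g.codRestrict U2 hgU2 with hgc
  have hgccoe : ∀ x : V, (gc x : V) = g x := fun x => rfl
  set Φ0 : V →ₗ[K] (↥U2 ⧸ U1c) := U1c.mkQ.comp gc with hΦ0
  have hΦ0x : ∀ x : V, Φ0 x = Submodule.Quotient.mk (gc x) := fun x => rfl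
  have hΦ0mem : ∀ x : V, (Φ0 x = 0 ↔ g x ∈ U1) := by
    intro x
    rw [hΦ0x, Submodule.Quotient.mk_eq_zero]
    simp only [hU1c, Submodule.mem_comap, Submodule.subtype_apply]
    rw [hgccoe]
  have hΦ0ker : U2 ≤ LinearMap.ker Φ0 := by
    intro x hx
    rw [LinearMap.mem_ker, hΦ0mem]
    exact hgU2U1 x hx
  set Φ := U2.liftQ Φ0 hΦ0ker with hΦ
  have hΦinj : Function.Injective Φ := by
    rw [← LinearMap.ker_eq_bot, hΦ, Submodule.ker_liftQ_eq_bot]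
    intro x hx
    rw [LinearMap.mem_ker, hΦ0mem] at hx
    rw [hU1def, LinearMap.mem_ker] at hx
    rw [hU2def, LinearMap.mem_ker]
    have h4 : (g ^ (m-1)) x = (g ^ (m-2)) (g x) := by
      rw [← Module.End.mul_apply, ← pow_succ]
      congr 2
      omega
    rw [h4, hx]
  have hΦcomm : Φ.comp fbar = f2bar.comp Φ := by
    refine LinearMap.ext fun q => ?_
    obtain ⟨x, rfl⟩ := U2.mkQ_surjective q
    have hL : Φ (fbar (U2.mkQ x)) = Submodule.Quotient.mk (gc (f x)) := by
      rw [hfbar, Submodule.mkQ_apply, Submodule.mapQ_apply, hΦ, Submodule.liftQ_apply, hΦ0x]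
    have hR : f2bar (Φ (U2.mkQ x)) = Submodule.Quotient.mk (f2 (gc x)) := by
      rw [hΦ, Submodule.mkQ_apply, Submodule.liftQ_apply, hΦ0x, hf2bar, Submodule.mapQ_apply]
    simp only [LinearMap.comp_apply]
    rw [hL, hR, Submodule.Quotient.eq]
    simp only [hU1c, Submodule.mem_comap, Submodule.subtype_apply, Submodule.coe_sub]
    rw [hgccoe, hf2coe, hgccoe]
    have h5 : g (f x) - f (g x) = (g * g) x := by
      have h6 := congrArg (fun (φ : Module.End K V) => φ x) hrel
      simp only [Module.End.mul_apply, LinearMap.add_apply, sq] at h6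
      rw [show (g * g) x = g (g x) from rfl, h6]
      abel
    rw [h5]
    have h7 : (g * g) x ∈ U1 := by
      rw [hU1def, LinearMap.mem_ker]
      have : (g ^ (m-2)) ((g * g) x) = (g ^ m) x := by
        rw [← Module.End.mul_apply, ← sq, ← pow_add]
        congr 2
        omega
      rw [this, hgm, LinearMap.zero_apply]
    exact h7
  -- level 3 objects
  set U0c : Submodule K ↥U1c := U0.comap (U2.subtype.comp U1c.subtype) with hU0c
  set f3 := f2.restrict hU1cf with hf3
  have hf3coe : ∀ x : ↥U1c, ((f3 x : ↥U2) : V) = f ((x : ↥U2) : V) := fun x => rfl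
  have hU0cf : ∀ x ∈ U0c, f3 x ∈ U0c := by
    intro x hx
    simp only [hU0c, Submodule.mem_comap, LinearMap.comp_apply, Submodule.subtype_apply] at hx ⊢
    rw [hf3coe]
    exact hfker (m-3) _ hx
  set f3bar := U0c.mapQ U0c f3 (fun x hx => hU0cf x hx) with hf3bar
  -- Ψ : ↥U2 ⧸ U1c ↪ ↥U1c ⧸ U0c
  have hgU2U2 : ∀ x ∈ U2, g x ∈ U2 := fun x _ => hgU2 x
  set g2 : Module.End K ↥U2 := g.restrict hgU2U2 with hg2
  have hg2coe : ∀ x : ↥U2, (g2 x : V) = g (x : V) := fun x => rfl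
  have hg2cod : ∀ x : ↥U2, g2 x ∈ U1c := by
    intro x
    simp only [hU1c, Submodule.mem_comap, Submodule.subtype_apply]
    rw [hg2coe]
    exact hgU2U1 _ x.2
  set gc2 : ↥U2 →ₗ[K] ↥U1c := g2.codRestrict U1c hg2cod with hgc2
  have hgc2coe : ∀ x : ↥U2, ((gc2 x : ↥U2) : V) = g (x : V) := fun x => rfl
  set Ψ0 : ↥U2 →ₗ[K] (↥U1c ⧸ U0c) := U0c.mkQ.comp gc2 with hΨ0
  have hΨ0x : ∀ x : ↥U2, Ψ0 x = Submodule.Quotient.mk (gc2 x) := fun x => rfl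
  have hΨ0mem : ∀ x : ↥U2, (Ψ0 x = 0 ↔ g (x : V) ∈ U0) := by
    intro x
    rw [hΨ0x, Submodule.Quotient.mk_eq_zero]
    simp only [hU0c, Submodule.mem_comap, LinearMap.comp_apply, Submodule.subtype_apply]
    rw [hgc2coe]
  have hΨ0ker : U1c ≤ LinearMap.ker Ψ0 := by
    intro x hx
    rw [LinearMap.mem_ker, hΨ0mem]
    simp only [hU1c, Submodule.mem_comap, Submodule.subtype_apply] at hx
    exact hgU1U0 _ hx
  set Ψ := U1c.liftQ Ψ0 hΨ0ker with hΨ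
  have hΨinj : Function.Injective Ψ := by
    rw [← LinearMap.ker_eq_bot, hΨ, Submodule.ker_liftQ_eq_bot]
    intro x hx
    rw [LinearMap.mem_ker, hΨ0mem] at hx
    rw [hU0def, LinearMap.mem_ker] at hx
    simp only [hU1c, Submodule.mem_comap, Submodule.subtype_apply]
    rw [hU1def, LinearMap.mem_ker]
    have h4 : (g ^ (m-2)) (x : V) = (g ^ (m-3)) (g (x : V)) := by
      rw [← Module.End.mul_apply, ← pow_succ]
      congr 2
      omega
    rw [h4, hx]
  have hΨcomm : Ψ.comp f2bar = f3bar.comp Ψ := by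
    refine LinearMap.ext fun q => ?_
    obtain ⟨x, rfl⟩ := U1c.mkQ_surjective q
    have hL : Ψ (f2bar (U1c.mkQ x)) = Submodule.Quotient.mk (gc2 (f2 x)) := by
      rw [hf2bar, Submodule.mkQ_apply, Submodule.mapQ_apply, hΨ, Submodule.liftQ_apply, hΨ0x]
    have hR : f3bar (Ψ (U1c.mkQ x)) = Submodule.Quotient.mk (f3 (gc2 x)) := by
      rw [hΨ, Submodule.mkQ_apply, Submodule.liftQ_apply, hΨ0x, hf3bar, Submodule.mapQ_apply]
    simp only [LinearMap.comp_apply]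
    rw [hL, hR, Submodule.Quotient.eq]
    simp only [hU0c, Submodule.mem_comap, LinearMap.comp_apply, Submodule.subtype_apply,
      Submodule.coe_sub]
    rw [hgc2coe, hf3coe, hf2coe, hgc2coe]
    have h5 : g (f (x : V)) - f (g (x : V)) = (g * g) (x : V) := by
      have h6 := congrArg (fun (φ : Module.End K V) => φ (x : V)) hrel
      simp only [Module.End.mul_apply, LinearMap.add_apply, sq] at h6
      rw [show (g * g) (x : V) = g (g (x : V)) from rfl, h6]
      abel
    rw [h5]
    exact hg2U2U0 ((x : ↥U2) : V) (x : ↥U2).2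
  -- assemble
  have O1 : 1 ≤ finrank K (Module.End.maxGenEigenspace fbar μ) :=
    one_le_finrank_maxGen fbar μ hμ
  have M1 : finrank K (Module.End.maxGenEigenspace fbar μ)
      ≤ finrank K (Module.End.maxGenEigenspace f2bar μ) :=
    finrank_maxGen_le_of_injective Φ hΦinj fbar f2bar hΦcomm μ
  have M2 : finrank K (Module.End.maxGenEigenspace f2bar μ)
      ≤ finrank K (Module.End.maxGenEigenspace f3bar μ) :=
    finrank_maxGen_le_of_injective Ψ hΨinj f2bar f3bar hΨcomm μ
  have E1 := finrank_maxGen_add_le f U2 hU2f μ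
  have E2 := finrank_maxGen_add_le f2 U1c hU1cf μ
  have E3 := finrank_maxGen_add_le f3 U0c hU0cf μ
  rw [← hfbar, ← hf2] at E1
  rw [← hf2bar, ← hf3] at E2
  rw [← hf3bar] at E3
  omega

theorem main_alg {F : Type*} [Field F] [IsAlgClosed F] (n : ℕ)
    (hcast : ∀ i j : ℕ, i ≤ n → j ≤ n → (i : F) = (j : F) → i = j)
    (A B : Matrix (Fin n) (Fin n) F)
    (h : A ^ 2 - 2 * (A * B) + B ^ 2 = 0)
    (hmult : ∀ μ : F, (A.charpoly).rootMultiplicity μ ≤ 2) :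
    A * B = B * A := by
  classical
  set C := A - B with hC
  have key : C * A - (A * C + C * C) = -(A ^ 2 - 2 * (A * B) + B ^ 2) := by
    rw [hC]; noncomm_ring
  rw [h, neg_zero] at key
  have hrelmat : C * A = A * C + C * C := sub_eq_zero.mp key
  have key2 : C * C - (A * B - B * A) = A ^ 2 - 2 * (A * B) + B ^ 2 := by
    rw [hC]; noncomm_ring
  rw [h] at key2
  have hCC : C * C = A * B - B * A := sub_eq_zero.mp key2
  -- move to endomorphisms
  set b := Pi.basisFun F (Fin n) with hb
  set f := Matrix.toLin b b A with hf
  set g := Matrix.toLin b b C with hg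
  have hmul : ∀ M N : Matrix (Fin n) (Fin n) F,
      Matrix.toLin b b (M * N) = Matrix.toLin b b M * Matrix.toLin b b N := by
    intro M N
    rw [Matrix.toLin_mul b b b, Module.End.mul_eq_comp]
  have hrelEnd : g * f = f * g + g ^ 2 := by
    rw [hg, hf, ← hmul, ← hmul, sq, ← hmul, ← map_add, hrelmat]
  have hfinrank : finrank F (Fin n → F) = n := by simp
  have hcast' : ∀ i j : ℕ, i ≤ finrank F (Fin n → F) → j ≤ finrank F (Fin n → F)
      → (i : F) = (j : F) → i = j := by
    rw [hfinrank]; exact hcast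
  have hnilg : IsNilpotent g := isNilpotent_of_comm_relation hcast' f g hrelEnd
  by_cases hg2 : g ^ 2 = 0
  · -- C * C = 0
    have hCC0 : C * C = 0 := by
      apply (Matrix.toLin b b).injective
      rw [hmul, map_zero, ← sq, hg2]
    rw [hCC0] at hCC
    exact sub_eq_zero.mp hCC.symm
  · exfalso
    obtain ⟨μ, h3⟩ := exists_three_le_finrank_maxGen f g hrelEnd hnilg hg2
    have hcp : LinearMap.charpoly f = A.charpoly := by
      rw [← LinearMap.charpoly_toMatrix f b, hf, LinearMap.toMatrix_toLin]
    have := hmult μ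
    rw [← hcp, rootMult_eq_finrank_maxGen f μ] at this
    omega

/-- Let `K` be a field of characteristic `0` or greater than `n`, and let
`A, B ∈ Mₙ(K)` satisfy `A² - 2AB + B² = 0`. If every eigenvalue of `A` in the algebraic
closure of `K` has algebraic multiplicity at most `2` (i.e. multiplicity as a root of the
characteristic polynomial), then `AB = BA`. -/
theorem stmt3 (n : ℕ) (K : Type*) [Field K]
    (hchar : ringChar K = 0 ∨ n < ringChar K)
    (A B : Matrix (Fin n) (Fin n) K)
    (h : A ^ 2 - 2 * (A * B) + B ^ 2 = 0)
    (hmult : ∀ μ : AlgebraicClosure K,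
      ((A.map (algebraMap K (AlgebraicClosure K))).charpoly).rootMultiplicity μ ≤ 2) :
    A * B = B * A := by
  classical
  set F := AlgebraicClosure K with hF
  have hinj : Function.Injective (algebraMap K F) := (algebraMap K F).injective
  -- cast injectivity on [0, n]
  have hcast : ∀ i j : ℕ, i ≤ n → j ≤ n → (i : F) = (j : F) → i = j := by
    rcases hchar with h0 | hp
    · haveI : CharP K 0 := by rw [← h0]; exact ringChar.charP K
      haveI : CharZero K := CharP.charP_to_charZero K
      haveI : CharZero F := charZero_of_injective_algebraMap hinj
      exact fun i j _ _ hij => Nat.cast_injective hij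
    · haveI hKp : CharP K (ringChar K) := ringChar.charP K
      haveI hFp : CharP F (ringChar K) := charP_of_injective_algebraMap hinj (ringChar K)
      intro i j hi hj hij
      exact CharP.natCast_injOn_Iio F (ringChar K)
        (Set.mem_Iio.mpr (by omega)) (Set.mem_Iio.mpr (by omega)) hij
  set A' := A.map (algebraMap K F) with hA'
  set B' := B.map (algebraMap K F) with hB'
  have hmap : ∀ M N : Matrix (Fin n) (Fin n) K,
      (M * N).map (algebraMap K F) = M.map (algebraMap K F) * N.map (algebraMap K F) :=
    fun M N => Matrix.map_mul
  have h' : A' ^ 2 - 2 * (A' * B') + B' ^ 2 = 0 := by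
    have := congrArg (fun M : Matrix (Fin n) (Fin n) K =>
      (RingHom.mapMatrix (algebraMap K F)) M) h
    simpa [RingHom.mapMatrix_apply, map_sub, map_add, map_mul, map_pow, map_ofNat] using this
  have hcomm := main_alg n hcast A' B' h' hmult
  have h5 : (A * B).map (algebraMap K F) = (B * A).map (algebraMap K F) := by
    rw [hmap, hmap]
    exact hcomm
  ext i j
  apply hinj
  calc (algebraMap K F) ((A * B) i j) = ((A * B).map (algebraMap K F)) i j := rfl
    _ = ((B * A).map (algebraMap K F)) i j := by rw [h5]
    _ = (algebraMap K F) ((B * A) i j) := rfl
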